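/- arXiv:1603.07735 — 6 statements merged into one kernel-verified Lean document; each statement's English description precedes it below -/
import Mathlib

section
/- If P ⊆ ℝⁿ is a polytope in standard form (i.e. P equals the intersection of the non-negative orthant with the affine hull of P), then every face F of P is also in standard form: F equals the intersection of the non-negative orthant with the affine hull of F. -/
/-- The support of a non-negative vector, as a 0/1 vector. -/
noncomputable def supp {n : ℕ} (v : Fin n → ℝ) : Fin n → ℝ := fun i => if 0 < v i then 1 else 0

/-- A set is in standard form if it equals the intersection of the non-negative
orthant with its affine hull. -/
def StdForm {n : ℕ} (P : Set (Fin n → ℝ)) : Prop :=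
  P = {x | ∀ i, 0 ≤ x i} ∩ (affineSpan ℝ P : Set (Fin n → ℝ))

/-- `F` is a face of `P`: the zero set in `P` of a valid linear inequality. -/
def IsFace {n : ℕ} (P F : Set (Fin n → ℝ)) : Prop :=
  ∃ (a : Fin n → ℝ) (b : ℝ), (∀ x ∈ P, b ≤ ∑ i, a i * x i) ∧
    F = {x ∈ P | ∑ i, a i * x i = b}

theorem stmt0 {n : ℕ} (P : Set (Fin n → ℝ)) (hComp : IsCompact P) (hConv : Convex ℝ P)
    (hStd : StdForm P) (F : Set (Fin n → ℝ)) (hF : IsFace P F) :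
    F = {x | ∀ i, 0 ≤ x i} ∩ (affineSpan ℝ F : Set (Fin n → ℝ)) := by
  obtain ⟨a, b, hab, hFeq⟩ := hF
  have hFP : F ⊆ P := by rw [hFeq]; exact fun x hx => hx.1
  -- the linear functional x ↦ ∑ aᵢ xᵢ, as an affine map
  let L : (Fin n → ℝ) →ₗ[ℝ] ℝ :=
    { toFun := fun x => ∑ i, a i * x i
      map_add' := fun x y => by simp [mul_add, Finset.sum_add_distrib]
      map_smul' := fun c x => by
        simp [Finset.mul_sum, mul_comm, mul_left_comm] }
  let f : (Fin n → ℝ) →ᵃ[ℝ] ℝ := L.toAffineMap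
  let Q : AffineSubspace ℝ (Fin n → ℝ) := AffineSubspace.comap f (AffineSubspace.mk' b ⊥)
  have hQmem : ∀ x : Fin n → ℝ, x ∈ Q ↔ ∑ i, a i * x i = b := by
    intro x
    simp only [Q, AffineSubspace.mem_comap, AffineSubspace.mem_mk',
      Submodule.mem_bot, vsub_eq_sub, sub_eq_zero]
    simp [f, L]
  have hspan : affineSpan ℝ F ≤ Q := by
    rw [affineSpan_le]
    intro y hy
    rw [hFeq] at hy
    exact (hQmem y).mpr hy.2
  apply Set.Subset.antisymm
  · intro x hx
    refine ⟨fun i => ?_, subset_affineSpan ℝ F hx⟩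
    have hxP := hFP hx
    rw [hStd] at hxP
    exact hxP.1 i
  · rintro x ⟨hx0, hxA⟩
    have hxP : x ∈ P := by
      rw [hStd]
      exact ⟨hx0, affineSpan_mono ℝ hFP hxA⟩
    rw [hFeq]
    exact ⟨hxP, (hQmem x).mp (hspan hxA)⟩
end

section
/- Let P ⊆ ℝⁿ be a polytope in standard form. Then the map sending a non-empty face F of P to supp(x) for any x in the relative interior of F is a well-defined order-isomorphism from the poset of non-empty faces of P (ordered by inclusion) onto the poset S(P) = {supp(x) : x ∈ P} (ordered componentwise). -/
open Set

/-- From a relative-interior point one can extend slightly past it within the set. -/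
lemma exists_extension {n : ℕ} {F : Set (Fin n → ℝ)} {x y : Fin n → ℝ}
    (hx : x ∈ intrinsicInterior ℝ F) (hy : y ∈ F) :
    ∃ ε : ℝ, 0 < ε ∧ x + ε • (x - y) ∈ F := by
  obtain ⟨q, hq, rfl⟩ := hx
  have hyspan : y ∈ affineSpan ℝ F := subset_affineSpan ℝ F hy
  have hmem : ∀ t : ℝ, (q : Fin n → ℝ) + t • ((q : Fin n → ℝ) - y) ∈ affineSpan ℝ F := by
    intro t
    have := AffineSubspace.smul_vsub_vadd_mem (affineSpan ℝ F) t q.2 hyspan q.2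
    simpa [vsub_eq_sub, vadd_eq_add, add_comm] using this
  set c : ℝ → affineSpan ℝ F := fun t => ⟨(q : Fin n → ℝ) + t • ((q : Fin n → ℝ) - y), hmem t⟩ with hc
  have hcont : Continuous c := by
    apply Continuous.subtype_mk
    fun_prop
  have h0 : c 0 ∈ interior ((↑) ⁻¹' F : Set (affineSpan ℝ F)) := by
    have : c 0 = q := by simp [hc]
    rwa [this]
  have hnhds : c ⁻¹' (interior ((↑) ⁻¹' F : Set (affineSpan ℝ F))) ∈ nhds (0 : ℝ) :=
    hcont.continuousAt.preimage_mem_nhds (isOpen_interior.mem_nhds h0)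
  obtain ⟨δ, hδ, hball⟩ := Metric.mem_nhds_iff.1 hnhds
  refine ⟨δ/2, by linarith, ?_⟩
  have : c (δ/2) ∈ interior ((↑) ⁻¹' F : Set (affineSpan ℝ F)) := by
    apply hball
    simp only [Metric.mem_ball, Real.dist_eq, sub_zero]
    rw [abs_of_pos (by linarith)]
    linarith
  have h2 : c (δ/2) ∈ ((↑) ⁻¹' F : Set (affineSpan ℝ F)) := interior_subset this
  exact h2

/-- A uniform small ε keeping the extended point nonnegative. -/
lemma exists_eps {n : ℕ} (x y : Fin n → ℝ) :
    ∃ ε : ℝ, 0 < ε ∧ ∀ i, 0 < x i → 0 ≤ x i + ε * (x i - y i) := by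
  classical
  set g : Fin n → ℝ := fun i => if 0 < x i then x i / (|x i - y i| + 1) else 1 with hg
  set s : Finset ℝ := insert 1 (Finset.univ.image g) with hs
  have hne : s.Nonempty := ⟨1, Finset.mem_insert_self _ _⟩
  have hεpos : 0 < s.min' hne := by
    rw [Finset.lt_min'_iff]
    intro b hb
    rw [hs] at hb
    rcases Finset.mem_insert.1 hb with h | h
    · rw [h]; norm_num
    · obtain ⟨i, _, hi⟩ := Finset.mem_image.1 h
      rw [← hi, hg]
      dsimp only
      split_ifs with hxi
      · positivity
      · norm_num
  refine ⟨s.min' hne, hεpos, ?_⟩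
  intro i hxi
  set ε := s.min' hne with hε
  have hmin : ε ≤ g i := by
    apply Finset.min'_le
    rw [hs]
    exact Finset.mem_insert_of_mem (Finset.mem_image_of_mem g (Finset.mem_univ i))
  rw [hg] at hmin
  simp only [if_pos hxi] at hmin
  have habs : -(|x i - y i|) ≤ x i - y i := neg_abs_le _
  have habs0 : 0 ≤ |x i - y i| := abs_nonneg _
  have key : ε * (|x i - y i| + 1) ≤ x i := by
    rw [div_eq_mul_inv] at hmin
    have h1 : (0:ℝ) < |x i - y i| + 1 := by linarith
    calc ε * (|x i - y i| + 1) ≤ x i * (|x i - y i| + 1)⁻¹ * (|x i - y i| + 1) := by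
          apply mul_le_mul_of_nonneg_right hmin (le_of_lt h1)
      _ = x i := by field_simp
  nlinarith [mul_le_mul_of_nonneg_left habs (le_of_lt hεpos)]

/-- A relative-interior point has maximal support. -/
lemma relint_pos {n : ℕ} {P F : Set (Fin n → ℝ)} (hP0 : ∀ z ∈ P, ∀ i, 0 ≤ z i)
    (hFP : F ⊆ P) {x y : Fin n → ℝ} (hx : x ∈ intrinsicInterior ℝ F) (hy : y ∈ F)
    {i : Fin n} (hi : 0 < y i) : 0 < x i := by
  obtain ⟨ε, hε, hz⟩ := exists_extension hx hy
  have hz0 : 0 ≤ (x + ε • (x - y)) i := hP0 _ (hFP hz) i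
  simp only [Pi.add_apply, Pi.smul_apply, Pi.sub_apply, smul_eq_mul] at hz0
  nlinarith

/-- A point of `P` with support dominated by that of a relative-interior point of a face
belongs to the face. -/
lemma mem_face_of_supp_le {n : ℕ} {P F : Set (Fin n → ℝ)} (hStd : StdForm P)
    (hF : IsFace P F) {x y : Fin n → ℝ} (hx : x ∈ intrinsicInterior ℝ F) (hy : y ∈ P)
    (hsupp : ∀ i, x i = 0 → y i = 0) : y ∈ F := by
  obtain ⟨a, b, hab, rfl⟩ := hF
  have hxF : x ∈ {x ∈ P | ∑ i, a i * x i = b} := intrinsicInterior_subset hx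
  have hxP : x ∈ P := hxF.1
  have hx0 : ∀ i, 0 ≤ x i := by
    have := hxP; rw [hStd] at this; exact this.1
  have hy0 : ∀ i, 0 ≤ y i := by
    have := hy; rw [hStd] at this; exact this.1
  obtain ⟨ε, hε, hεp⟩ := exists_eps x y
  set z : Fin n → ℝ := x + ε • (x - y) with hzdef
  have hz0 : ∀ i, 0 ≤ z i := by
    intro i
    rcases (hx0 i).lt_or_eq with pos | zero
    · have := hεp i pos
      simpa [hzdef] using this
    · have hyi : y i = 0 := hsupp i zero.symm
      simp [hzdef, ← zero, hyi]
  have hzspan : z ∈ affineSpan ℝ P := by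
    have hxs : x ∈ affineSpan ℝ P := subset_affineSpan ℝ P hxP
    have hys : y ∈ affineSpan ℝ P := subset_affineSpan ℝ P hy
    have := AffineSubspace.smul_vsub_vadd_mem (affineSpan ℝ P) ε hxs hys hxs
    simpa [hzdef, vsub_eq_sub, vadd_eq_add, add_comm] using this
  have hzP : z ∈ P := by rw [hStd]; exact ⟨hz0, hzspan⟩
  have hzb : b ≤ ∑ i, a i * z i := hab z hzP
  have hyb : b ≤ ∑ i, a i * y i := hab y hy
  have hxb : ∑ i, a i * x i = b := hxF.2
  refine ⟨hy, le_antisymm ?_ hyb⟩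
  have hsum : ∑ i, a i * z i = (1 + ε) * b - ε * ∑ i, a i * y i := by
    have h1 : ∀ i ∈ Finset.univ, a i * z i
        = (a i * x i + ε * (a i * x i)) - ε * (a i * y i) := by
      intro i _
      simp only [hzdef, Pi.add_apply, Pi.smul_apply, Pi.sub_apply, smul_eq_mul]
      ring
    rw [Finset.sum_congr rfl h1, Finset.sum_sub_distrib, Finset.sum_add_distrib,
      ← Finset.mul_sum, ← Finset.mul_sum, hxb]
    ring
  rw [hsum] at hzb
  nlinarith

lemma face_convex {n : ℕ} {P F : Set (Fin n → ℝ)} (hConv : Convex ℝ P)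
    (hF : IsFace P F) : Convex ℝ F := by
  obtain ⟨a, b, hab, rfl⟩ := hF
  intro x hx y hy s t hs ht hst
  refine ⟨hConv hx.1 hy.1 hs ht hst, ?_⟩
  have h1 : ∀ i ∈ Finset.univ, a i * (s • x + t • y) i
      = s * (a i * x i) + t * (a i * y i) := by
    intro i _
    simp only [Pi.add_apply, Pi.smul_apply, smul_eq_mul]
    ring
  rw [Finset.sum_congr rfl h1, Finset.sum_add_distrib, ← Finset.mul_sum, ← Finset.mul_sum,
    hx.2, hy.2, ← add_mul, hst, one_mul]

lemma face_subset {n : ℕ} {P F : Set (Fin n → ℝ)} (hF : IsFace P F) : F ⊆ P := by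
  obtain ⟨a, b, hab, rfl⟩ := hF
  exact fun x hx => hx.1

/-- The candidate face associated with a support vector. -/
lemma isFace_of_supp {n : ℕ} {P : Set (Fin n → ℝ)} (hStd : StdForm P) (u : Fin n → ℝ) :
    IsFace P {y ∈ P | ∀ i, u i ≤ 0 → y i = 0} := by
  classical
  have hP0 : ∀ z ∈ P, ∀ i, 0 ≤ z i := by
    intro z hz i; rw [hStd] at hz; exact hz.1 i
  refine ⟨fun i => if u i ≤ 0 then 1 else 0, 0, ?_, ?_⟩
  · intro x hx
    apply Finset.sum_nonneg
    intro i _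
    show 0 ≤ (if u i ≤ 0 then (1:ℝ) else 0) * x i
    split_ifs with h
    · simpa using hP0 x hx i
    · simp
  · ext y
    simp only [Set.mem_setOf_eq]
    constructor
    · rintro ⟨hyP, hy⟩
      refine ⟨hyP, ?_⟩
      apply Finset.sum_eq_zero
      intro i _
      split_ifs with h
      · rw [hy i h, mul_zero]
      · rw [zero_mul]
    · rintro ⟨hyP, hy⟩
      refine ⟨hyP, fun i hi => ?_⟩
      have hterm : ∀ j ∈ Finset.univ, 0 ≤ (if u j ≤ 0 then (1:ℝ) else 0) * y j := by
        intro j _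
        split_ifs with h
        · simpa using hP0 y hyP j
        · simp
      have := (Finset.sum_eq_zero_iff_of_nonneg hterm).1 hy i (Finset.mem_univ i)
      rw [if_pos hi, one_mul] at this
      exact this

theorem stmt9 {n : ℕ} (P : Set (Fin n → ℝ)) (hComp : IsCompact P) (hConv : Convex ℝ P)
    (hStd : StdForm P) :
    ∃ φ : {F : Set (Fin n → ℝ) // IsFace P F ∧ F.Nonempty} ≃o {u : Fin n → ℝ // u ∈ supp '' P},
      ∀ (F : {F : Set (Fin n → ℝ) // IsFace P F ∧ F.Nonempty}) (x : Fin n → ℝ),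
        x ∈ intrinsicInterior ℝ (F : Set (Fin n → ℝ)) → (φ F : Fin n → ℝ) = supp x := by
  classical
  have hP0 : ∀ z ∈ P, ∀ i, 0 ≤ z i := by
    intro z hz i; rw [hStd] at hz; exact hz.1 i
  set Sub := {F : Set (Fin n → ℝ) // IsFace P F ∧ F.Nonempty} with hSub
  have hrel : ∀ F : Sub, (intrinsicInterior ℝ (F : Set (Fin n → ℝ))).Nonempty :=
    fun F => F.2.2.intrinsicInterior (face_convex hConv F.2.1)
  choose pt hpt using hrel
  have hptF : ∀ F : Sub, pt F ∈ (F : Set (Fin n → ℝ)) := fun F => intrinsicInterior_subset (hpt F)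
  have hptP : ∀ F : Sub, pt F ∈ P := fun F => face_subset F.2.1 (hptF F)
  -- support equality on the relative interior
  have hsupp_eq : ∀ (F : Sub) (x : Fin n → ℝ), x ∈ intrinsicInterior ℝ (F : Set (Fin n → ℝ)) →
      supp (pt F) = supp x := by
    intro F x hx
    funext i
    simp only [supp]
    have h1 : 0 < pt F i ↔ 0 < x i := by
      constructor
      · intro h
        exact relint_pos hP0 (face_subset F.2.1) hx (hptF F) h
      · intro h
        exact relint_pos hP0 (face_subset F.2.1) (hpt F) (intrinsicInterior_subset hx) h
    exact if_congr h1 rfl rfl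
  -- every nonempty face is determined by the support of its relative-interior point
  have hface_eq : ∀ F : Sub,
      (F : Set (Fin n → ℝ)) = {y ∈ P | ∀ i, supp (pt F) i ≤ 0 → y i = 0} := by
    intro F
    ext y
    constructor
    · intro hy
      refine ⟨face_subset F.2.1 hy, fun i hi => ?_⟩
      have hnot : ¬ 0 < pt F i := by
        intro h
        simp only [supp, if_pos h] at hi
        linarith
      by_contra hyi
      have : 0 < y i := lt_of_le_of_ne (hP0 y (face_subset F.2.1 hy) i) (Ne.symm hyi)
      exact hnot (relint_pos hP0 (face_subset F.2.1) (hpt F) hy this)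
    · rintro ⟨hyP, hy⟩
      apply mem_face_of_supp_le hStd F.2.1 (hpt F) hyP
      intro i hi
      apply hy i
      simp [supp, hi]
  -- the forward map
  set φf : Sub → {u : Fin n → ℝ // u ∈ supp '' P} :=
    fun F => ⟨supp (pt F), pt F, hptP F, rfl⟩ with hφf
  -- the inverse map
  have hψ_face : ∀ u : {u : Fin n → ℝ // u ∈ supp '' P},
      IsFace P {y ∈ P | ∀ i, (u : Fin n → ℝ) i ≤ 0 → y i = 0} ∧
      ({y ∈ P | ∀ i, (u : Fin n → ℝ) i ≤ 0 → y i = 0}).Nonempty := by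
    intro u
    refine ⟨isFace_of_supp hStd _, ?_⟩
    obtain ⟨x, hxP, hxu⟩ := u.2
    refine ⟨x, hxP, fun i hi => ?_⟩
    rw [← hxu] at hi
    simp only [supp] at hi
    by_contra hxi
    have : 0 < x i := lt_of_le_of_ne (hP0 x hxP i) (Ne.symm hxi)
    rw [if_pos this] at hi
    linarith
  set ψf : {u : Fin n → ℝ // u ∈ supp '' P} → Sub :=
    fun u => ⟨{y ∈ P | ∀ i, (u : Fin n → ℝ) i ≤ 0 → y i = 0}, hψ_face u⟩ with hψf
  -- left inverse
  have hleft : ∀ F : Sub, ψf (φf F) = F := by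
    intro F
    apply Subtype.ext
    exact (hface_eq F).symm
  -- right inverse
  have hright : ∀ u, φf (ψf u) = u := by
    intro u
    apply Subtype.ext
    obtain ⟨x, hxP, hxu⟩ := u.2
    have hxmem : x ∈ (ψf u : Set (Fin n → ℝ)) := by
      refine ⟨hxP, fun i hi => ?_⟩
      rw [← hxu] at hi
      simp only [supp] at hi
      by_contra hxi
      have : 0 < x i := lt_of_le_of_ne (hP0 x hxP i) (Ne.symm hxi)
      rw [if_pos this] at hi
      linarith
    funext i
    show supp (pt (ψf u)) i = (u : Fin n → ℝ) i
    rw [← hxu]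
    simp only [supp]
    rcases (hP0 x hxP i).lt_or_eq with pos | zero
    · rw [if_pos pos, if_pos]
      exact relint_pos hP0 (face_subset (ψf u).2.1) (hpt (ψf u)) hxmem pos
    · have hpt0 : pt (ψf u) i = 0 :=
        (hptF (ψf u)).2 i (by rw [← hxu]; simp [supp, ← zero])
      rw [if_neg (by rw [hpt0]; exact lt_irrefl 0), if_neg (by rw [← zero]; exact lt_irrefl 0)]
  -- order reflection
  have hmaprel : ∀ F G : Sub, (φf F ≤ φf G ↔ F ≤ G) := by
    intro F G
    constructor
    · intro h
      show (F : Set (Fin n → ℝ)) ⊆ (G : Set (Fin n → ℝ))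
      rw [hface_eq F, hface_eq G]
      rintro y ⟨hyP, hy⟩
      refine ⟨hyP, fun i hi => ?_⟩
      exact hy i (le_trans (h i) hi)
    · intro h
      intro i
      simp only [hφf]
      show supp (pt F) i ≤ supp (pt G) i
      simp only [supp]
      split_ifs with h1 h2
      · exact le_refl 1
      · exfalso
        exact h2 (relint_pos hP0 (face_subset G.2.1) (hpt G) (h (hptF F)) h1)
      · norm_num
      · exact le_refl 0
  refine ⟨⟨⟨φf, ψf, hleft, hright⟩, ?_⟩, ?_⟩
  · exact hmaprel _ _
  · intro F x hx
    show supp (pt F) = supp x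
    exact hsupp_eq F x hx
end

section
/- Let P ⊆ ℝⁿ be a polytope in standard form. A point x ∈ P is a vertex (extreme point) of P if and only if its support is minimal among supports of points of P, i.e. there is no y ∈ P with supp(y) < supp(x). -/
theorem stmt11 {n : ℕ} (P : Set (Fin n → ℝ)) (hComp : IsCompact P) (hConv : Convex ℝ P)
    (hStd : StdForm P) (x : Fin n → ℝ) (hx : x ∈ P) :
    x ∈ Set.extremePoints ℝ P ↔ ¬∃ y ∈ P, supp y ≤ supp x ∧ supp y ≠ supp x := by
  have hnonneg : ∀ v ∈ P, ∀ i, 0 ≤ v i := by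
    intro v hv i
    have : v ∈ {x : Fin n → ℝ | ∀ i, 0 ≤ x i} ∩ (affineSpan ℝ P : Set (Fin n → ℝ)) :=
      hStd ▸ hv
    exact this.1 i
  have hmemP : ∀ v : Fin n → ℝ, (∀ i, 0 ≤ v i) → v ∈ affineSpan ℝ P → v ∈ P := by
    intro v h1 h2
    rw [hStd]; exact ⟨h1, h2⟩
  constructor
  · -- extreme → minimal support
    rintro hext ⟨y, hyP, hle, hne⟩
    rw [mem_extremePoints] at hext
    set d : Fin n → ℝ := fun i => x i - y i with hd
    -- where x vanishes, so does y (hence d)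
    have hzero : ∀ i, x i = 0 → d i = 0 := by
      intro i hxi
      have h1 := hle i
      simp only [supp, hxi, lt_irrefl, if_neg (lt_irrefl 0)] at h1
      by_cases hy : 0 < y i
      · rw [if_pos hy] at h1; norm_num at h1
      · have : y i = 0 := le_antisymm (not_lt.1 hy) (hnonneg y hyP i)
        simp [hd, hxi, this]
    -- index where supports differ
    obtain ⟨i0, hi0⟩ : ∃ i, supp y i ≠ supp x i := Function.ne_iff.1 hne
    have hxi0 : 0 < x i0 := by
      by_contra h
      have hx0 : x i0 = 0 := le_antisymm (not_lt.1 h) (hnonneg x hx i0)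
      have hy0 : y i0 = 0 := by
        have := hzero i0 hx0
        simp only [hd] at this; linarith
      simp [supp, hx0, hy0] at hi0
    have hyi0 : y i0 = 0 := by
      by_contra h
      have : 0 < y i0 := lt_of_le_of_ne (hnonneg y hyP i0) (Ne.symm h)
      simp [supp, this, hxi0] at hi0
    have hdi0 : 0 < d i0 := by simp [hd, hyi0, hxi0]
    -- choose a small t > 0
    set T : Finset (Fin n) := Finset.univ.filter (fun i => d i ≠ 0) with hT
    have hi0T : i0 ∈ T := by simp [hT]; exact ne_of_gt hdi0
    have hTne : T.Nonempty := ⟨i0, hi0T⟩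
    have hposT : ∀ i ∈ T, 0 < x i := by
      intro i hi
      rcases lt_or_eq_of_le (hnonneg x hx i) with h | h
      · exact h
      · exact absurd (hzero i h.symm) (by simpa [hT] using hi)
    set t : ℝ := T.inf' hTne (fun i => x i / |d i|) with ht
    have htpos : 0 < t := by
      rw [ht, Finset.lt_inf'_iff]
      intro i hi
      exact div_pos (hposT i hi) (abs_pos.2 (by simpa [hT] using hi))
    have hkey : ∀ i, t * |d i| ≤ x i := by
      intro i
      by_cases hdi : d i = 0
      · simp [hdi]; exact hnonneg x hx i
      · have hiT : i ∈ T := by simp [hT, hdi]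
        have := Finset.inf'_le (fun i => x i / |d i|) hiT
        rw [← ht] at this
        calc t * |d i| ≤ (x i / |d i|) * |d i| := by
              exact mul_le_mul_of_nonneg_right this (abs_nonneg _)
          _ = x i := by field_simp
    set z₁ : Fin n → ℝ := fun i => x i + t * d i with hz₁
    set z₂ : Fin n → ℝ := fun i => x i - t * d i with hz₂
    have hxspan : x ∈ affineSpan ℝ P := subset_affineSpan ℝ P hx
    have hyspan : y ∈ affineSpan ℝ P := subset_affineSpan ℝ P hyP
    have hz₁P : z₁ ∈ P := by
      apply hmemP
      · intro i
        have h1 := hkey i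
        have h2 : -(t * |d i|) ≤ t * d i := by
          have := neg_abs_le (d i)
          nlinarith
        simp only [hz₁]; linarith
      · have := AffineSubspace.smul_vsub_vadd_mem (affineSpan ℝ P) t hxspan hyspan hxspan
        convert this using 1
        funext i
        simp [hz₁, hd]
        ring
    have hz₂P : z₂ ∈ P := by
      apply hmemP
      · intro i
        have h1 := hkey i
        have h2 : t * d i ≤ t * |d i| := by
          have := le_abs_self (d i)
          nlinarith
        simp only [hz₂]; linarith
      · have := AffineSubspace.smul_vsub_vadd_mem (affineSpan ℝ P) (-t) hxspan hyspan hxspan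
        convert this using 1
        funext i
        simp [hz₂, hd]
        ring
    have hseg : x ∈ openSegment ℝ z₁ z₂ := by
      refine ⟨1/2, 1/2, by norm_num, by norm_num, by norm_num, ?_⟩
      funext i
      simp [hz₁, hz₂]
      ring
    have := (hext.2 z₁ hz₁P z₂ hz₂P hseg).1
    have := congrFun this i0
    simp only [hz₁] at this
    nlinarith
  · -- minimal support → extreme
    intro hmin
    rw [mem_extremePoints]
    refine ⟨hx, ?_⟩
    intro y hyP z hzP hseg
    obtain ⟨a, b, ha, hb, hab, hsum⟩ := hseg
    have hsum' : ∀ i, a * y i + b * z i = x i := fun i => congrFun hsum i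
    by_cases hyz : y = z
    · subst hyz
      have hxy : y = x := by
        funext i
        have h2 : (a + b) * y i = a * y i + b * y i := by ring
        rw [hab, one_mul] at h2
        linarith [hsum' i]
      exact ⟨hxy, hxy⟩
    · exfalso
      set d : Fin n → ℝ := fun i => y i - z i with hd
      have hdne : ∃ i, d i ≠ 0 := by
        by_contra h
        push_neg at h
        exact hyz (funext fun i => by have := h i; simp [hd] at this; linarith)
      have hzero : ∀ i, x i = 0 → y i = 0 ∧ z i = 0 := by
        intro i hxi
        have h1 := hsum' i
        have h2 := hnonneg y hyP i
        have h3 := hnonneg z hzP i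
        constructor <;> nlinarith
      set T : Finset (Fin n) := Finset.univ.filter (fun i => d i ≠ 0) with hT
      have hTne : T.Nonempty := by
        obtain ⟨i, hi⟩ := hdne
        exact ⟨i, by simp [hT, hi]⟩
      have hposT : ∀ i ∈ T, 0 < x i := by
        intro i hi
        rcases lt_or_eq_of_le (hnonneg x hx i) with h | h
        · exact h
        · obtain ⟨h1, h2⟩ := hzero i h.symm
          exact absurd (by simp [hd, h1, h2] : d i = 0) (by simpa [hT] using hi)
      obtain ⟨j, hjT, hjmin⟩ := T.exists_min_image (fun i => x i / |d i|) hTne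
      have hdj : d j ≠ 0 := by simpa [hT] using hjT
      have hxj : 0 < x j := hposT j hjT
      set c : ℝ := x j / d j with hc
      set w : Fin n → ℝ := fun i => x i - c * d i with hw
      have hwj : w j = 0 := by
        simp only [hw, hc]
        field_simp
        ring
      have habs : |c| = x j / |d j| := by
        rw [hc, abs_div, abs_of_pos hxj]
      have hwnn : ∀ i, 0 ≤ w i := by
        intro i
        by_cases hdi : d i = 0
        · simp [hw, hdi]; exact hnonneg x hx i
        · have hiT : i ∈ T := by simp [hT, hdi]
          have hmin' := hjmin i hiT
          have h1 : |c * d i| ≤ x i := by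
            rw [abs_mul, habs]
            calc x j / |d j| * |d i| ≤ x i / |d i| * |d i| :=
                  mul_le_mul_of_nonneg_right hmin' (abs_nonneg _)
              _ = x i := by field_simp
          have h2 : c * d i ≤ |c * d i| := le_abs_self _
          simp only [hw]; linarith
      have hwspan : w ∈ affineSpan ℝ P := by
        have hxspan : x ∈ affineSpan ℝ P := subset_affineSpan ℝ P hx
        have hyspan : y ∈ affineSpan ℝ P := subset_affineSpan ℝ P hyP
        have hzspan : z ∈ affineSpan ℝ P := subset_affineSpan ℝ P hzP
        have := AffineSubspace.smul_vsub_vadd_mem (affineSpan ℝ P) (-c) hyspan hzspan hxspan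
        convert this using 1
        funext i
        simp [hw, hd]
        ring
      have hwP : w ∈ P := hmemP w hwnn hwspan
      apply hmin
      refine ⟨w, hwP, ?_, ?_⟩
      · intro i
        by_cases hxi : 0 < x i
        · simp only [supp, if_pos hxi]
          split_ifs <;> norm_num
        · have hx0 : x i = 0 := le_antisymm (not_lt.1 hxi) (hnonneg x hx i)
          obtain ⟨h1, h2⟩ := hzero i hx0
          have : w i = 0 := by simp [hw, hd, hx0, h1, h2]
          simp [supp, this, hx0]
      · intro h
        have := congrFun h j
        simp [supp, hwj, hxj] at this
end

section
/- Let P ⊆ ℝⁿ be a polytope in standard form. A point x ∈ P is a vertex of P if and only if x is the unique point of P with support equal to supp(x). -/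
lemma supp_eq_iff' {n : ℕ} {v w : Fin n → ℝ} (h : supp v = supp w) (i : Fin n) :
    0 < v i ↔ 0 < w i := by
  have := congrFun h i
  simp only [supp] at this
  split_ifs at this with h1 h2 h3
  · exact iff_of_true h1 h2
  · exact absurd this one_ne_zero
  · exact absurd this.symm one_ne_zero
  · exact iff_of_false h1 h3

theorem stmt12 {n : ℕ} (P : Set (Fin n → ℝ)) (hComp : IsCompact P) (hConv : Convex ℝ P)
    (hStd : StdForm P) (x : Fin n → ℝ) (hx : x ∈ P) :
    x ∈ Set.extremePoints ℝ P ↔ ∀ y ∈ P, supp y = supp x → y = x := by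
  have hPnn : ∀ v ∈ P, ∀ i, 0 ≤ v i := by
    intro v hv
    rw [hStd] at hv
    exact hv.1
  constructor
  · intro hex y hy hsupp
    -- forward: extreme point implies unique with its support
    set T : Finset (Fin n) := Finset.univ.filter (fun i => 0 < x i) with hT
    set F : Finset ℝ := insert (1:ℝ) (T.image (fun i => x i / (|y i - x i| + 1))) with hF
    have hFne : F.Nonempty := ⟨1, Finset.mem_insert_self _ _⟩
    set ε : ℝ := F.inf' hFne id / 2 with hε
    have hinf : 0 < F.inf' hFne id := by
      rw [Finset.lt_inf'_iff]
      intro b hb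
      rcases Finset.mem_insert.1 hb with rfl | hb
      · norm_num
      · obtain ⟨i, hi, rfl⟩ := Finset.mem_image.1 hb
        have hxi : 0 < x i := (Finset.mem_filter.1 hi).2
        exact div_pos hxi (by positivity)
    have hεpos : 0 < ε := half_pos hinf
    have hkey : ∀ i, 0 < x i → ε * |y i - x i| < x i := by
      intro i hxi
      have hmem : x i / (|y i - x i| + 1) ∈ F :=
        Finset.mem_insert_of_mem (Finset.mem_image.2 ⟨i, Finset.mem_filter.2 ⟨Finset.mem_univ _, hxi⟩, rfl⟩)
      have h1 : ε ≤ (x i / (|y i - x i| + 1)) / 2 := by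
        have h0 : F.inf' hFne id ≤ x i / (|y i - x i| + 1) := Finset.inf'_le id hmem
        rw [hε]
        linarith
      have hd : (0:ℝ) < |y i - x i| + 1 := by positivity
      have h2 : ε * (|y i - x i| + 1) ≤ x i / 2 := by
        calc ε * (|y i - x i| + 1) ≤ (x i / (|y i - x i| + 1)) / 2 * (|y i - x i| + 1) := by
              apply mul_le_mul_of_nonneg_right h1 (le_of_lt hd)
          _ = x i / 2 := by field_simp
      have h3 : ε * |y i - x i| ≤ ε * (|y i - x i| + 1) - ε := by ring_nf; linarith [abs_nonneg (y i - x i)]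
      linarith
    set z : Fin n → ℝ := fun i => x i + ε * (x i - y i) with hzdef
    have hznn : ∀ i, 0 ≤ z i := by
      intro i
      by_cases hxi : 0 < x i
      · have := hkey i hxi
        have habs : ε * (x i - y i) ≥ -(ε * |y i - x i|) := by
          have : -(|y i - x i|) ≤ x i - y i := by
            rw [abs_sub_comm]; exact neg_abs_le _
          nlinarith
        simp only [hzdef]
        linarith
      · have hx0 : x i = 0 := le_antisymm (not_lt.1 hxi) (hPnn x hx i)
        have hy0 : y i = 0 := le_antisymm (not_lt.1 (fun h => hxi ((supp_eq_iff' hsupp i).1 h))) (hPnn y hy i)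
        simp [hzdef, hx0, hy0]
    have hzaff : z ∈ affineSpan ℝ P := by
      have hm := AffineSubspace.smul_vsub_vadd_mem (affineSpan ℝ P) (1 + ε)
        (subset_affineSpan ℝ P hx) (subset_affineSpan ℝ P hy) (subset_affineSpan ℝ P hy)
      have : (1 + ε) • (x -ᵥ y) +ᵥ y = z := by
        funext i
        simp only [Pi.vadd_apply, Pi.smul_apply, vsub_eq_sub, Pi.sub_apply, vadd_eq_add,
          Pi.add_apply, smul_eq_mul, hzdef]
        ring
      rwa [this] at hm
    have hzP : z ∈ P := by
      rw [hStd]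
      exact ⟨hznn, hzaff⟩
    have hseg : x ∈ openSegment ℝ y z := by
      refine ⟨ε / (1 + ε), 1 / (1 + ε), by positivity, by positivity, ?_, ?_⟩
      · field_simp; ring
      · funext i
        simp only [Pi.add_apply, Pi.smul_apply, smul_eq_mul, hzdef]
        field_simp
        ring
    exact hex.2 hy hzP hseg
  · intro huniq
    refine ⟨hx, ?_⟩
    rintro y hy z hz ⟨a, b, ha, hb, hab, hxyz⟩
    by_cases hzy : z = y
    · subst hzy
      have hxz : x = z := by
        funext i
        have h0 := congrFun hxyz i
        simp only [Pi.add_apply, Pi.smul_apply, smul_eq_mul] at h0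
        calc x i = a * z i + b * z i := h0.symm
          _ = (a + b) * z i := by ring
          _ = z i := by rw [hab]; ring
      exact hxz.symm
    · exfalso
      set T : Finset (Fin n) := Finset.univ.filter (fun i => 0 < x i) with hT
      set F : Finset ℝ := insert a (T.image (fun i => x i / (|z i - y i| + 1))) with hF
      have hFne : F.Nonempty := ⟨a, Finset.mem_insert_self _ _⟩
      set s : ℝ := F.inf' hFne id / 2 with hs
      have hinf : 0 < F.inf' hFne id := by
        rw [Finset.lt_inf'_iff]
        intro c hc
        rcases Finset.mem_insert.1 hc with rfl | hc
        · exact ha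
        · obtain ⟨i, hi, rfl⟩ := Finset.mem_image.1 hc
          have hxi : 0 < x i := (Finset.mem_filter.1 hi).2
          exact div_pos hxi (by positivity)
      have hspos : 0 < s := half_pos hinf
      have hsa : s < a := by
        have h0 : F.inf' hFne id ≤ a := Finset.inf'_le id (Finset.mem_insert_self a _)
        rw [hs]
        linarith
      have hkey : ∀ i, 0 < x i → s * |z i - y i| < x i := by
        intro i hxi
        have hmem : x i / (|z i - y i| + 1) ∈ F :=
          Finset.mem_insert_of_mem (Finset.mem_image.2 ⟨i, Finset.mem_filter.2 ⟨Finset.mem_univ _, hxi⟩, rfl⟩)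
        have h1 : s ≤ (x i / (|z i - y i| + 1)) / 2 := by
          have h0 : F.inf' hFne id ≤ x i / (|z i - y i| + 1) := Finset.inf'_le id hmem
          rw [hs]
          linarith
        have hd : (0:ℝ) < |z i - y i| + 1 := by positivity
        have h2 : s * (|z i - y i| + 1) ≤ x i / 2 := by
          calc s * (|z i - y i| + 1) ≤ (x i / (|z i - y i| + 1)) / 2 * (|z i - y i| + 1) := by
                apply mul_le_mul_of_nonneg_right h1 (le_of_lt hd)
            _ = x i / 2 := by field_simp
        nlinarith [abs_nonneg (z i - y i)]
      set w : Fin n → ℝ := fun i => x i + s * (z i - y i) with hwdef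
      have hxi_eq : ∀ i, x i = a * y i + b * z i := by
        intro i
        have := congrFun hxyz i
        simp only [Pi.add_apply, Pi.smul_apply, smul_eq_mul] at this
        linarith
      have hwP : w ∈ P := by
        have hcomb := hConv hy hz (a := a - s) (b := b + s)
          (by linarith) (by linarith) (by linarith)
        have : (a - s) • y + (b + s) • z = w := by
          funext i
          simp only [Pi.add_apply, Pi.smul_apply, smul_eq_mul, hwdef]
          linear_combination -hxi_eq i
        rwa [this] at hcomb
      have hwsupp : supp w = supp x := by
        funext i
        simp only [supp]
        by_cases hxi : 0 < x i
        · have h1 := hkey i hxi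
          have habs : -(|z i - y i|) ≤ z i - y i := neg_abs_le _
          have h2 : s * (-(|z i - y i|)) ≤ s * (z i - y i) :=
            mul_le_mul_of_nonneg_left habs hspos.le
          have h3 : s * (-(|z i - y i|)) = -(s * |z i - y i|) := by ring
          have hwpos : 0 < w i := by
            simp only [hwdef]
            linarith
          simp [hwpos, hxi]
        · have hx0 : x i = 0 := le_antisymm (not_lt.1 hxi) (hPnn x hx i)
          have hy0 : y i = 0 := by
            have := hxi_eq i
            have := hPnn y hy i
            have := hPnn z hz i
            nlinarith
          have hz0 : z i = 0 := by
            have := hxi_eq i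
            have := hPnn y hy i
            have := hPnn z hz i
            nlinarith
          have hw0 : w i = 0 := by simp [hwdef, hx0, hy0, hz0]
          simp [hw0, hx0]
      have hwx : w = x := huniq w hwP hwsupp
      apply hzy
      funext i
      have := congrFun hwx i
      simp only [hwdef] at this
      have hzy' : s * (z i - y i) = 0 := by linarith
      have := mul_eq_zero.1 hzy'
      rcases this with h | h
      · exact absurd h (ne_of_gt hspos)
      · linarith
end

section
/- Let P ⊆ ℝⁿ be a polytope in standard form. The points of the relative interior of P are exactly the points of P with maximal support, i.e. those x ∈ P such that supp(y) ≤ supp(x) for all y ∈ P. -/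
lemma mem_intrinsicInterior_iff_ball {n : ℕ} {P : Set (Fin n → ℝ)} {x : Fin n → ℝ} :
    x ∈ intrinsicInterior ℝ P ↔ x ∈ affineSpan ℝ P ∧
      ∃ ε > 0, ∀ z, z ∈ affineSpan ℝ P → dist z x < ε → z ∈ P := by
  rw [mem_intrinsicInterior]
  constructor
  · rintro ⟨y, hy, rfl⟩
    refine ⟨y.2, ?_⟩
    rw [mem_interior_iff_mem_nhds, Metric.mem_nhds_iff] at hy
    obtain ⟨ε, hε, hball⟩ := hy
    refine ⟨ε, hε, fun z hz hd => ?_⟩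
    exact hball (show (⟨z, hz⟩ : affineSpan ℝ P) ∈ Metric.ball y ε by
      simpa [Metric.mem_ball, Subtype.dist_eq] using hd)
  · rintro ⟨hx, ε, hε, h⟩
    refine ⟨⟨x, hx⟩, ?_, rfl⟩
    rw [mem_interior_iff_mem_nhds, Metric.mem_nhds_iff]
    exact ⟨ε, hε, fun z hz => h z z.2 (by simpa [Metric.mem_ball, Subtype.dist_eq] using hz)⟩

lemma supp_le_of_mem_intrinsicInterior {n : ℕ} {P : Set (Fin n → ℝ)} (hStd : StdForm P)
    {x : Fin n → ℝ} (hx : x ∈ intrinsicInterior ℝ P) : ∀ y ∈ P, supp y ≤ supp x := by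
  have hnn : ∀ v ∈ P, ∀ i, 0 ≤ v i := fun v hv => (hStd ▸ hv).1
  have hxP : x ∈ P := intrinsicInterior_subset hx
  obtain ⟨hxS, ε, hε, hball⟩ := mem_intrinsicInterior_iff_ball.mp hx
  intro y hy i
  simp only [supp]
  by_cases hyi : 0 < y i
  · by_cases hxi : 0 < x i
    · simp [hyi, hxi]
    exfalso
    have hxi0 : x i = 0 := le_antisymm (not_lt.mp hxi) (hnn x hxP i)
    set t : ℝ := ε / (2 * (‖x - y‖ + 1)) with ht_def
    have hnorm : (0:ℝ) < ‖x - y‖ + 1 := by positivity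
    have ht : 0 < t := by positivity
    set u : Fin n → ℝ := t • (x - y) + x with hu_def
    have huS : u ∈ affineSpan ℝ P := by
      have := AffineSubspace.smul_vsub_vadd_mem (affineSpan ℝ P) t hxS
        (subset_affineSpan ℝ P hy) hxS
      simpa [vsub_eq_sub, vadd_eq_add] using this
    have hd : dist u x < ε := by
      have : dist u x = t * ‖x - y‖ := by
        rw [dist_eq_norm]
        simp [hu_def, norm_smul, abs_of_pos ht]
      rw [this, ht_def]
      rw [div_mul_eq_mul_div, div_lt_iff₀ (by positivity)]
      nlinarith [norm_nonneg (x - y)]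
    have huP : u ∈ P := hball u huS hd
    have h0 : 0 ≤ u i := hnn u huP i
    have : u i = -(t * y i) := by simp [hu_def, hxi0]
    nlinarith
  · simp only [if_neg hyi]
    positivity

theorem stmt14 {n : ℕ} (P : Set (Fin n → ℝ)) (hComp : IsCompact P) (hConv : Convex ℝ P)
    (hStd : StdForm P) :
    intrinsicInterior ℝ P = {x ∈ P | ∀ y ∈ P, supp y ≤ supp x} := by
  have hnn : ∀ v ∈ P, ∀ i, 0 ≤ v i := fun v hv => (hStd ▸ hv).1
  ext x
  simp only [Set.mem_setOf_eq]
  constructor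
  · intro hx
    exact ⟨intrinsicInterior_subset hx, supp_le_of_mem_intrinsicInterior hStd hx⟩
  · rintro ⟨hxP, hmax⟩
    obtain ⟨z, hz⟩ := Set.Nonempty.intrinsicInterior hConv ⟨x, hxP⟩
    have hzP : z ∈ P := intrinsicInterior_subset hz
    have hzmax := supp_le_of_mem_intrinsicInterior hStd hz
    have hsupp : supp x = supp z := le_antisymm (hzmax x hxP) (hmax z hzP)
    -- if x i = 0 then z i = 0
    have hzero : ∀ i, x i = 0 → z i = 0 := by
      intro i hi
      by_contra hne
      have hzi : 0 < z i := lt_of_le_of_ne (hnn z hzP i) (Ne.symm hne)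
      have := congrFun hsupp i
      simp [supp, hi, hzi] at this
    obtain ⟨hzS, ε, hε, hball⟩ := mem_intrinsicInterior_iff_ball.mp hz
    have hxS : x ∈ affineSpan ℝ P := subset_affineSpan ℝ P hxP
    -- find small t > 0 such that w = t • (x - z) + x is nonnegative
    have hev : ∀ᶠ t : ℝ in nhds 0, ∀ i, 0 < x i → 0 < x i + t * (x i - z i) := by
      rw [Filter.eventually_all]
      intro i
      by_cases hxi : 0 < x i
      · have hcont : Filter.Tendsto (fun t : ℝ => x i + t * (x i - z i)) (nhds 0)
            (nhds (x i)) := by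
          have h := (continuous_const.add (continuous_id.mul continuous_const)
            : Continuous fun t : ℝ => x i + t * (x i - z i)).tendsto 0
          have h2 : Filter.Tendsto (fun t : ℝ => x i + t * (x i - z i)) (nhds 0)
              (nhds (x i + 0 * (x i - z i))) := h
          simpa only [zero_mul, add_zero] using h2
        filter_upwards [hcont.eventually (eventually_gt_nhds hxi)] with t ht _
        exact ht
      · filter_upwards with t ht
        exact absurd ht hxi
    obtain ⟨t, htw, ht0⟩ : ∃ t : ℝ, (∀ i, 0 < x i → 0 < x i + t * (x i - z i)) ∧ t ∈ Set.Ioi (0:ℝ) :=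
      ((hev.filter_mono nhdsWithin_le_nhds).and
        (eventually_mem_nhdsWithin (a := (0:ℝ)) (s := Set.Ioi 0))).exists
    rw [Set.mem_Ioi] at ht0
    set w : Fin n → ℝ := t • (x - z) + x with hw_def
    have hwS : w ∈ affineSpan ℝ P := by
      have := AffineSubspace.smul_vsub_vadd_mem (affineSpan ℝ P) t hxS hzS hxS
      simpa [vsub_eq_sub, vadd_eq_add] using this
    have hwP : w ∈ P := by
      rw [hStd]
      refine ⟨fun i => ?_, hwS⟩
      by_cases hxi : 0 < x i
      · have := htw i hxi
        have heq : w i = x i + t * (x i - z i) := by simp [hw_def]; ring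
        rw [heq]; exact le_of_lt this
      · have hxi0 : x i = 0 := le_antisymm (not_lt.mp hxi) (hnn x hxP i)
        have hzi0 : z i = 0 := hzero i hxi0
        have : w i = 0 := by simp [hw_def, hxi0, hzi0]
        rw [this]
    -- now show x is in the intrinsic interior
    rw [mem_intrinsicInterior_iff_ball]
    refine ⟨hxS, t / (1 + t) * ε, by positivity, fun u huS hd => ?_⟩
    have h1t : (0:ℝ) < 1 + t := by linarith
    set a : ℝ := t / (1 + t) with ha_def
    set b : ℝ := 1 / (1 + t) with hb_def
    have ha : 0 < a := by positivity
    have hb : 0 < b := by positivity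
    have hab : a + b = 1 := by rw [ha_def, hb_def]; field_simp; ring
    set z' : Fin n → ℝ := a⁻¹ • (u - w) + w with hz'_def
    have hz'S : z' ∈ affineSpan ℝ P := by
      have := AffineSubspace.smul_vsub_vadd_mem (affineSpan ℝ P) a⁻¹ huS hwS hwS
      simpa [vsub_eq_sub, vadd_eq_add] using this
    have hzeq : z = a⁻¹ • (x - w) + w := by
      funext i
      simp only [hz'_def, Pi.add_apply, Pi.smul_apply, Pi.sub_apply, smul_eq_mul, hw_def,
        ha_def]
      field_simp
      ring
    have hdist : dist z' z < ε := by
      have : z' - z = a⁻¹ • (u - x) := by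
        rw [hzeq]
        funext i
        simp only [hz'_def, Pi.add_apply, Pi.sub_apply, Pi.smul_apply, smul_eq_mul]
        ring
      rw [dist_eq_norm, this, norm_smul]
      have h1a : ‖a⁻¹‖ = a⁻¹ := by
        rw [Real.norm_eq_abs, abs_of_pos (by positivity)]
      rw [h1a]
      have hd' : ‖u - x‖ < a * ε := by rw [← dist_eq_norm]; exact hd
      calc a⁻¹ * ‖u - x‖ < a⁻¹ * (a * ε) := by
            apply mul_lt_mul_of_pos_left hd' (by positivity)
        _ = ε := by field_simp
    have hz'P : z' ∈ P := hball z' hz'S hdist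
    have hueq : u = a • z' + b • w := by
      funext i
      simp only [hz'_def, Pi.add_apply, Pi.smul_apply, Pi.sub_apply, smul_eq_mul, ha_def,
        hb_def]
      field_simp
      ring
    rw [hueq]
    exact hConv hz'P hwP ha.le hb.le hab
end

section
/- There exists a finite measurement scenario and a no-signalling possibilistic (Boolean) empirical model s over it that is not the possibilistic collapse of any no-signalling probabilistic empirical model: concretely, consider X = {A,B,C,D}, contexts all 2-element subsets, outcomes O = {0,1,2}, and the model with possible joint outcomes AB ↦ {00,10,21}, AC ↦ {00,11,21}, AD ↦ {01,10,21}, BC ↦ {00,11}, BD ↦ {00,11}, CD ↦ {01,10}. Then there is no family of probability distributions e_C on O^C with agreeing marginals on overlaps whose supports are exactly these sets. -/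
/-- The possible joint outcomes of the model `s`: variables `A,B,C,D` are
`0,1,2,3`, and for `i < j` the tuple `(i, j, a, b)` is listed iff the joint
outcome assigning `a` to variable `i` and `b` to variable `j` is possible.
Contexts: `AB ↦ {00,10,21}`, `AC ↦ {00,11,21}`, `AD ↦ {01,10,21}`,
`BC ↦ {00,11}`, `BD ↦ {00,11}`, `CD ↦ {01,10}`. -/
def possible (i j : Fin 4) (a b : Fin 3) : Prop :=
  ((i : ℕ), (j : ℕ), (a : ℕ), (b : ℕ)) ∈
    [(0,1,0,0), (0,1,1,0), (0,1,2,1),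
     (0,2,0,0), (0,2,1,1), (0,2,2,1),
     (0,3,0,1), (0,3,1,0), (0,3,2,1),
     (1,2,0,0), (1,2,1,1),
     (1,3,0,0), (1,3,1,1),
     (2,3,0,1), (2,3,1,0)]

/-- There is no no-signalling probabilistic empirical model over the scenario with
variables `{A,B,C,D}`, contexts all two-element subsets, and outcomes `{0,1,2}`,
whose supports are exactly those of the possibilistic model `s`.
Here `p i j a b` is the probability, in the context `{i,j}` (for `i ≠ j`), of the
joint outcome assigning `a` to `i` and `b` to `j`; the symmetry condition says that
`p i j` and `p j i` describe the same distribution on the context `{i,j}`, and the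
marginal condition expresses no-signalling on the overlaps of contexts. -/
theorem stmt18 :
    ¬ ∃ p : Fin 4 → Fin 4 → Fin 3 → Fin 3 → ℝ,
      (∀ i j a b, 0 ≤ p i j a b) ∧
      (∀ i j, i ≠ j → ∑ a, ∑ b, p i j a b = 1) ∧
      (∀ i j a b, p i j a b = p j i b a) ∧
      (∀ i j j' a, i ≠ j → i ≠ j' → ∑ b, p i j a b = ∑ b, p i j' a b) ∧
      (∀ i j a b, i < j → (0 < p i j a b ↔ possible i j a b)) := by
  rintro ⟨p, hpos, hsum, hsym, hmarg, hsupp⟩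
  have hz : ∀ i j a b, i < j → ¬ possible i j a b → p i j a b = 0 := by
    intro i j a b hij hnp
    by_contra h
    exact hnp ((hsupp i j a b hij).mp (lt_of_le_of_ne (hpos i j a b) (Ne.symm h)))
  have hpos10 : 0 < p 0 1 1 0 := (hsupp 0 1 1 0 (by decide)).mpr (by unfold possible; decide)
  have h1 := hmarg 1 0 2 0 (by decide) (by decide)
  have h2 := hmarg 2 0 1 0 (by decide) (by decide)
  have h3 := hmarg 0 1 2 0 (by decide) (by decide)
  simp only [Fin.sum_univ_three, hsym 1 0, hsym 2 0, hsym 2 1] at h1 h2 h3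
  have z1 := hz 0 1 2 0 (by decide) (by unfold possible; decide)
  have z2 := hz 1 2 0 1 (by decide) (by unfold possible; decide)
  have z3 := hz 1 2 0 2 (by decide) (by unfold possible; decide)
  have z4 := hz 0 2 1 0 (by decide) (by unfold possible; decide)
  have z5 := hz 0 2 2 0 (by decide) (by unfold possible; decide)
  have z6 := hz 1 2 1 0 (by decide) (by unfold possible; decide)
  have z7 := hz 1 2 2 0 (by decide) (by unfold possible; decide)
  have z8 := hz 0 1 0 1 (by decide) (by unfold possible; decide)
  have z9 := hz 0 1 0 2 (by decide) (by unfold possible; decide)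
  have z10 := hz 0 2 0 1 (by decide) (by unfold possible; decide)
  have z11 := hz 0 2 0 2 (by decide) (by unfold possible; decide)
  linarith
end
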